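/- Let c, d be positive integers and let G be a graph containing a d-meager (2cd, 2c²d)-cluster. Then G contains a c-hassle as an induced subgraph. -/

import Mathlib

open scoped Classical

/-- `l` is the vertex sequence of an induced path in `G`. -/
def IsPathList {V : Type} (G : SimpleGraph V) (l : List V) : Prop :=
  l ≠ [] ∧ l.Nodup ∧ ∀ i j : Fin l.length,
    (G.Adj (l.get i) (l.get j) ↔ (i.1 + 1 = j.1 ∨ j.1 + 1 = i.1))

/-- `l` is the traversal sequence of a walk in `G`: nonempty, with consecutive
entries adjacent.  The vertex set of the walk is the set of entries of `l`. -/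
def WalkList {V : Type} (G : SimpleGraph V) (l : List V) : Prop :=
  l ≠ [] ∧ ∀ (i : ℕ) (h : i + 1 < l.length),
    G.Adj (l.get ⟨i, by omega⟩) (l.get ⟨i + 1, h⟩)

/-- The walk `l` is `c`-stretched: the image of every set of at most `c`
consecutive indices induces a path. -/
def IsStretched {V : Type} (G : SimpleGraph V) (c : ℕ) (l : List V) : Prop :=
  ∀ i len : ℕ, 0 < len → len ≤ c → i + len ≤ l.length →
    ∃ p : List V, (∀ v, v ∈ p ↔ v ∈ (l.drop i).take len) ∧ IsPathList G p

/-- `G` (restricted to `{x} ∪ ⋃ Ws`) is a `c`-hassle with neck `x` and walks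
`Ws`: at least `c` pairwise disjoint `c`-stretched walks, arbitrary edges
between distinct walks, and the neck `x` has a neighbor in each walk but is
anticomplete to the first and last `c` vertices of each walk. -/
def IsHassle {V : Type} (G : SimpleGraph V) (c : ℕ) (x : V)
    (Ws : Finset (List V)) : Prop :=
  c ≤ Ws.card ∧
  (∀ l ∈ Ws, WalkList G l ∧ IsStretched G c l ∧ x ∉ l) ∧
  (∀ l ∈ Ws, ∀ l' ∈ Ws, l ≠ l' → ∀ v ∈ l, v ∉ l') ∧
  (∀ l ∈ Ws, ∃ v ∈ l, G.Adj x v) ∧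
  (∀ l ∈ Ws, ∀ v, (v ∈ l.take c ∨ v ∈ l.drop (l.length - c)) → ¬ G.Adj x v)

/-- `(S, L)` is an `(s,l)`-cluster in `G` (with pairwise anticomplete paths). -/
def IsCluster {V : Type} (G : SimpleGraph V) (s l : ℕ)
    (S : Finset V) (L : Finset (List V)) : Prop :=
  S.card = s ∧ L.card = l ∧
  (∀ P ∈ L, IsPathList G P ∧ ∀ v ∈ P, v ∉ S) ∧
  (∀ P ∈ L, ∀ Q ∈ L, P ≠ Q → ∀ u ∈ P, ∀ v ∈ Q, u ≠ v ∧ ¬ G.Adj u v) ∧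
  (∀ x ∈ S, ∀ P ∈ L, ∃ v ∈ P, G.Adj x v)

/-- The cluster `(S, L)` is `d`-meager. -/
def IsMeager {V : Type} (G : SimpleGraph V) (d : ℕ)
    (S : Finset V) (L : Finset (List V)) : Prop :=
  ∀ P ∈ L, ∀ v ∈ P, (S.filter (fun y => G.Adj v y)).card < d

namespace Stmt6Aux
variable {V : Type} {G : SimpleGraph V}

lemma isPathList_segment {P : List V} (hP : IsPathList G P) (lo len : ℕ)
    (hlen : 0 < len) (hle : lo + len ≤ P.length) :
    IsPathList G ((P.drop lo).take len) := by
  have hL : ((P.drop lo).take len).length = len := by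
    simp [List.length_take, List.length_drop]; omega
  have hsub : ((P.drop lo).take len).Sublist P :=
    (List.take_sublist _ _).trans (List.drop_sublist _ _)
  refine ⟨?_, hP.2.1.sublist hsub, ?_⟩
  · intro h; rw [h] at hL; simp at hL; omega
  · intro i j
    have hi : i.1 < len := by omega
    have hj : j.1 < len := by omega
    have hi' : lo + i.1 < P.length := by omega
    have hj' : lo + j.1 < P.length := by omega
    have e1 : ((P.drop lo).take len).get i = P.get ⟨lo + i.1, hi'⟩ := by
      simp only [List.get_eq_getElem, List.getElem_take, List.getElem_drop]
    have e2 : ((P.drop lo).take len).get j = P.get ⟨lo + j.1, hj'⟩ := by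
      simp only [List.get_eq_getElem, List.getElem_take, List.getElem_drop]
    rw [e1, e2, hP.2.2 ⟨lo + i.1, hi'⟩ ⟨lo + j.1, hj'⟩]
    simp only []
    omega

lemma isPathList_reverse {P : List V} (hP : IsPathList G P) : IsPathList G P.reverse := by
  refine ⟨by simp [hP.1], List.nodup_reverse.mpr hP.2.1, ?_⟩
  intro i j
  have hn : P.reverse.length = P.length := List.length_reverse
  have hi : i.1 < P.length := by omega
  have hj : j.1 < P.length := by omega
  have hi' : P.length - 1 - i.1 < P.length := by omega
  have hj' : P.length - 1 - j.1 < P.length := by omega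
  have e1 : P.reverse.get i = P.get ⟨P.length - 1 - i.1, hi'⟩ := by
    simp only [List.get_eq_getElem, List.getElem_reverse]
  have e2 : P.reverse.get j = P.get ⟨P.length - 1 - j.1, hj'⟩ := by
    simp only [List.get_eq_getElem, List.getElem_reverse]
  rw [e1, e2, hP.2.2 ⟨_, hi'⟩ ⟨_, hj'⟩]
  simp only []
  omega


def zig (a m i : ℕ) : ℕ :=
  if i ≤ m then a + i else if i ≤ 2*m then a + (2*m - i) else a + (i - 2*m)

lemma zig_le (a m : ℕ) : ∀ i ≤ 2*m, a ≤ zig a m i ∧ zig a m i ≤ a + m := by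
  intro i hi; unfold zig; split_ifs <;> omega

lemma zig1 (a m : ℕ) : ∀ i ≤ m, zig a m i = a + i := by
  intro i hi; unfold zig; split_ifs <;> omega

lemma zig2 (a m : ℕ) : ∀ i, m ≤ i → i ≤ 2*m → zig a m i = a + (2*m - i) := by
  intro i h1 h2; unfold zig; split_ifs <;> omega

lemma zig_step (a m : ℕ) (hm : 0 < m) (k : ℕ) :
    zig a m (k+1) = zig a m k + 1 ∨ zig a m k = zig a m (k+1) + 1 := by
  unfold zig; split_ifs <;> omega

lemma build_walk (c : ℕ) (hc : 0 < c) (x : V) (P : List V)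
    (hP : IsPathList G P) (a j : ℕ) (hj : j < P.length) (hacj : a + c ≤ j)
    (hwin : ∀ k (hk : k < P.length), a ≤ k → k < a + c → ¬ G.Adj x (P.get ⟨k, hk⟩))
    (hadj : G.Adj x (P.get ⟨j, hj⟩)) :
    ∃ w : List V, w ≠ [] ∧ WalkList G w ∧ IsStretched G c w ∧
      (∀ v ∈ w, v ∈ P) ∧ (∃ v ∈ w, G.Adj x v) ∧
      (∀ v, (v ∈ w.take c ∨ v ∈ w.drop (w.length - c)) → ¬ G.Adj x v) := by
  set n := P.length with hn
  set m := j - a with hm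
  have hma : a + m = j := by omega
  have hcm : c ≤ m := by omega
  have hm0 : 0 < m := by omega
  -- the walk
  set w : List V := (List.range (2*m+1)).map
      (fun i => P.getD (zig a m i) (P.get ⟨j, hj⟩)) with hw
  have hwlen : w.length = 2*m+1 := by simp [hw]
  have hzlt : ∀ i ≤ 2*m, zig a m i < n := by
    intro i hi
    have := zig_le a m i hi
    omega
  have hwget : ∀ (i : ℕ) (hi : i < w.length),
      w.get ⟨i, hi⟩ = P.get ⟨zig a m i, hzlt i (by omega)⟩ := by
    intro i hi
    have hi' : i < 2*m+1 := by omega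
    simp only [hw, List.get_eq_getElem, List.getElem_map, List.getElem_range]
    exact List.getD_eq_getElem P _ (hzlt i (by omega))
  have hwmem : ∀ v, v ∈ w ↔ ∃ k, a ≤ k ∧ k ≤ j ∧ ∃ (hk : k < n), P.get ⟨k, hk⟩ = v := by
    intro v
    constructor
    · intro hv
      obtain ⟨i, hi, he⟩ := List.mem_iff_getElem.mp hv
      have hi2 : i ≤ 2*m := by omega
      have := zig_le a m i hi2
      refine ⟨zig a m i, by omega, by omega, hzlt i hi2, ?_⟩
      rw [← he]
      exact (hwget i hi).symm
    · rintro ⟨k, hak, hkj, hk, he⟩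
      have hik : k - a ≤ m := by omega
      have hz : zig a m (k - a) = k := by rw [zig1 a m _ hik]; omega
      have hilen : k - a < w.length := by omega
      refine List.mem_iff_getElem.mpr ⟨k - a, hilen, ?_⟩
      have := hwget (k - a) hilen
      simp only [List.get_eq_getElem] at this he ⊢
      rw [this]
      simp_rw [hz]
      exact he
  refine ⟨w, ?_, ⟨?_, ?_⟩, ?_, ?_, ?_, ?_⟩
  · -- nonempty
    intro h; rw [h] at hwlen; simp at hwlen
  · intro h; rw [h] at hwlen; simp at hwlen
  · -- walk adjacency
    intro i hi1
    rw [hwget i (by omega), hwget (i+1) hi1]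
    have h1 : i ≤ 2*m := by omega
    have h2 : i + 1 ≤ 2*m := by omega
    rw [hP.2.2 ⟨zig a m i, hzlt i h1⟩ ⟨zig a m (i+1), hzlt (i+1) h2⟩]
    simp only []
    rcases zig_step a m hm0 i with h | h
    · left; omega
    · right; omega
  · -- stretched
    intro i len hpos hlenc hile
    rw [hwlen] at hile
    set e := i + len - 1 with he
    have hie : i ≤ e := by omega
    have hee : e ≤ 2*m := by omega
    -- image interval
    have himg : ∃ lo hi, a ≤ lo ∧ lo ≤ hi ∧ hi ≤ j ∧
        (∀ k, i ≤ k → k ≤ e → lo ≤ zig a m k ∧ zig a m k ≤ hi) ∧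
        (∀ q, lo ≤ q → q ≤ hi → ∃ k, i ≤ k ∧ k ≤ e ∧ zig a m k = q) := by
      rcases le_or_gt e m with hem | hem
      · refine ⟨a + i, a + e, by omega, by omega, by omega, ?_, ?_⟩
        · intro k h1 h2; rw [zig1 a m k (by omega)]; omega
        · intro q h1 h2
          refine ⟨q - a, by omega, by omega, ?_⟩
          rw [zig1 a m _ (by omega)]; omega
      · rcases le_or_gt i m with him | him
        · -- straddle
          refine ⟨min (a + i) (a + (2*m - e)), a + m, by omega, by omega, by omega, ?_, ?_⟩
          · intro k h1 h2
            rcases le_or_gt k m with h | h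
            · rw [zig1 a m k h]; omega
            · rw [zig2 a m k (by omega) (by omega)]; omega
          · intro q h1 h2
            rcases le_or_gt (a + i) q with h | h
            · refine ⟨q - a, by omega, by omega, ?_⟩
              rw [zig1 a m _ (by omega)]; omega
            · refine ⟨2*m - (q - a), by omega, by omega, ?_⟩
              rw [zig2 a m _ (by omega) (by omega)]; omega
        · -- all decreasing
          refine ⟨a + (2*m - e), a + (2*m - i), by omega, by omega, by omega, ?_, ?_⟩
          · intro k h1 h2
            rw [zig2 a m k (by omega) (by omega)]; omega
          · intro q h1 h2
            refine ⟨2*m - (q - a), by omega, by omega, ?_⟩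
            rw [zig2 a m _ (by omega) (by omega)]; omega
    obtain ⟨lo, hi, halo, hlohi, hhij, hfwd, hbwd⟩ := himg
    refine ⟨(P.drop lo).take (hi - lo + 1), ?_, isPathList_segment hP lo _ (by omega) (by omega)⟩
    have hseglen : ((P.drop lo).take (hi - lo + 1)).length = hi - lo + 1 := by
      simp [List.length_take, List.length_drop]; omega
    have hwinlen : ((w.drop i).take len).length = len := by
      simp [List.length_take, List.length_drop]; omega
    intro v
    constructor
    · intro hv
      obtain ⟨t, ht, hte⟩ := List.mem_iff_getElem.mp hv
      rw [hseglen] at ht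
      have hlot : lo + t < n := by omega
      have hPt : v = P.get ⟨lo + t, hlot⟩ := by
        rw [← hte]; simp only [List.get_eq_getElem, List.getElem_take, List.getElem_drop]
      obtain ⟨k, hk1, hk2, hk3⟩ := hbwd (lo + t) (by omega) (by omega)
      refine List.mem_iff_getElem.mpr ⟨k - i, by rw [hwinlen]; omega, ?_⟩
      have hkw : k < w.length := by omega
      have : ((w.drop i).take len)[k - i]'(by rw [hwinlen]; omega) = w.get ⟨k, hkw⟩ := by
        simp only [List.get_eq_getElem, List.getElem_take, List.getElem_drop]
        congr 1; omega
      rw [this, hwget k hkw, hPt]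
      congr 1
      · simp [Fin.ext_iff, hk3]
    · intro hv
      obtain ⟨s, hs, hse⟩ := List.mem_iff_getElem.mp hv
      rw [hwinlen] at hs
      have hisw : i + s < w.length := by omega
      have hval : v = w.get ⟨i + s, hisw⟩ := by
        rw [← hse]; simp only [List.get_eq_getElem, List.getElem_take, List.getElem_drop]
      rw [hwget _ hisw] at hval
      obtain ⟨h1, h2⟩ := hfwd (i + s) (by omega) (by omega)
      refine List.mem_iff_getElem.mpr ⟨zig a m (i+s) - lo, by rw [hseglen]; omega, ?_⟩
      have : ((P.drop lo).take (hi - lo + 1))[zig a m (i+s) - lo]'(by rw [hseglen]; omega)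
          = P.get ⟨zig a m (i+s), hzlt _ (by omega)⟩ := by
        simp only [List.get_eq_getElem, List.getElem_take, List.getElem_drop]
        congr 1; omega
      rw [this, hval]
  · -- membership in P
    intro v hv
    obtain ⟨k, _, _, hk, he⟩ := (hwmem v).mp hv
    rw [← he]; exact List.get_mem _ _
  · -- neighbor
    refine ⟨P.get ⟨j, hj⟩, ?_, hadj⟩
    exact (hwmem _).mpr ⟨j, by omega, le_rfl, hj, rfl⟩
  · -- ends
    intro v hv
    have hkey : ∀ (idx : ℕ) (hidx : idx < w.length), a ≤ zig a m idx → zig a m idx < a + c →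
        v = w.get ⟨idx, hidx⟩ → ¬ G.Adj x v := by
      intro idx hidx h1 h2 hve
      rw [hve, hwget idx hidx]
      exact hwin _ _ h1 h2
    rcases hv with hv | hv
    · obtain ⟨t, ht, hte⟩ := List.mem_iff_getElem.mp hv
      have ht' : t < c := by
        have := (show (w.take c).length = min c w.length from List.length_take) ▸ ht
        simp [List.length_take] at this ⊢
        omega
      have htw : t < w.length := by omega
      have hzt : zig a m t = a + t := zig1 a m t (by omega)
      refine hkey t htw (by omega) (by omega) ?_
      rw [← hte]
      simp only [List.get_eq_getElem, List.getElem_take]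
    · obtain ⟨t, ht, hte⟩ := List.mem_iff_getElem.mp hv
      have hdl : (w.drop (w.length - c)).length = c := by
        simp [List.length_drop]; omega
      rw [hdl] at ht
      have hidx : (w.length - c) + t < w.length := by omega
      have hbig : m < (w.length - c) + t := by omega
      have hz : zig a m ((w.length - c) + t) = a + (2*m - ((w.length - c) + t)) :=
        zig2 a m _ (by omega) (by omega)
      refine hkey _ hidx (by omega) (by omega) ?_
      rw [← hte]
      simp only [List.get_eq_getElem, List.getElem_drop]

/-- there are `c` consecutive positions in `P` avoided by the neighborhood of `x`. -/
def HasWindow (G : SimpleGraph V) (c : ℕ) (x : V) (P : List V) : Prop :=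
  ∃ a, a + c ≤ P.length ∧ ∀ v ∈ (P.drop a).take c, ¬ G.Adj x v

lemma window_iff {c : ℕ} {x : V} {P : List V} {a : ℕ} (ha : a + c ≤ P.length) :
    (∀ v ∈ (P.drop a).take c, ¬ G.Adj x v) ↔
      (∀ k (hk : k < P.length), a ≤ k → k < a + c → ¬ G.Adj x (P.get ⟨k, hk⟩)) := by
  have hlen : ((P.drop a).take c).length = c := by
    simp [List.length_take, List.length_drop]; omega
  constructor
  · intro h k hk h1 h2
    apply h
    refine List.mem_iff_getElem.mpr ⟨k - a, by rw [hlen]; omega, ?_⟩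
    simp only [List.getElem_take, List.getElem_drop, List.get_eq_getElem]
    congr 1; omega
  · intro h v hv
    obtain ⟨t, ht, hte⟩ := List.mem_iff_getElem.mp hv
    rw [hlen] at ht
    have : v = P.get ⟨a + t, by omega⟩ := by
      rw [← hte]; simp only [List.getElem_take, List.getElem_drop, List.get_eq_getElem]
    rw [this]
    exact h _ _ (by omega) (by omega)

lemma good_to_walk (c : ℕ) (hc : 0 < c) (x : V) (P : List V)
    (hP : IsPathList G P) (hwin : HasWindow G c x P)
    (hadj : ∃ v ∈ P, G.Adj x v) :
    ∃ w : List V, w ≠ [] ∧ WalkList G w ∧ IsStretched G c w ∧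
      (∀ v ∈ w, v ∈ P) ∧ (∃ v ∈ w, G.Adj x v) ∧
      (∀ v, (v ∈ w.take c ∨ v ∈ w.drop (w.length - c)) → ¬ G.Adj x v) := by
  obtain ⟨a, ha, hwina⟩ := hwin
  rw [window_iff ha] at hwina
  obtain ⟨v, hvP, hv⟩ := hadj
  obtain ⟨j, hj, hje⟩ := List.mem_iff_getElem.mp hvP
  have hadj' : G.Adj x (P.get ⟨j, hj⟩) := by simpa [hje]
  set n := P.length with hn
  have hjnot : j < a ∨ a + c ≤ j := by
    by_contra h
    push_neg at h
    exact hwina j hj (by omega) (by omega) hadj'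
  rcases hjnot with hcase | hcase
  · -- use reverse
    have hPr := isPathList_reverse hP
    have hnr : P.reverse.length = n := by simp [hn]
    have ha0 : 0 < a := by omega
    set a' := n - (a + c) with ha'
    set j' := n - 1 - j with hj'
    have hj'lt : j' < P.reverse.length := by rw [hnr]; omega
    have hget : ∀ (k : ℕ) (hk : k < P.reverse.length),
        P.reverse.get ⟨k, hk⟩ = P.get ⟨n - 1 - k, by omega⟩ := by
      intro k hk
      simp only [List.get_eq_getElem, List.getElem_reverse]; rfl
    have hwin' : ∀ k (hk : k < P.reverse.length), a' ≤ k → k < a' + c →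
        ¬ G.Adj x (P.reverse.get ⟨k, hk⟩) := by
      intro k hk h1 h2
      rw [hget k hk]
      exact hwina _ _ (by omega) (by omega)
    have hadjr : G.Adj x (P.reverse.get ⟨j', hj'lt⟩) := by
      rw [hget j' hj'lt]
      have : n - 1 - j' = j := by omega
      simp_rw [this]
      exact hadj'
    obtain ⟨w, h1, h2, h3, h4, h5, h6⟩ :=
      build_walk c hc x P.reverse hPr a' j' hj'lt (by omega) hwin' hadjr
    exact ⟨w, h1, h2, h3, fun v hv => List.mem_reverse.mp (h4 v hv), h5, h6⟩
  · exact build_walk c hc x P hP a j hj hcase hwina hadj'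

lemma swap_count {α β : Type} (S : Finset α) (T : Finset β) (r : α → β → Prop) :
    ∑ x ∈ S, (T.filter (fun y => r x y)).card
      = ∑ y ∈ T, (S.filter (fun x => r x y)).card := by
  simp only [Finset.card_filter]
  exact Finset.sum_comm

lemma bad_count {c : ℕ} (hc : 0 < c) {x : V} {P : List V} (hnd : P.Nodup)
    (hbad : ¬ HasWindow G c x P) :
    P.length / c ≤ (P.toFinset.filter (fun v => G.Adj x v)).card := by
  set n := P.length with hn
  have hsel : ∀ t : Fin (n / c), ∃ k, ∃ (hk : k < n),
      t.1 * c ≤ k ∧ k < t.1 * c + c ∧ G.Adj x (P.get ⟨k, hk⟩) := by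
    intro t
    have htc : t.1 * c + c ≤ n := by
      have h1 : (t.1 + 1) * c ≤ (n / c) * c := Nat.mul_le_mul_right c t.2
      have h2 : (n / c) * c ≤ n := Nat.div_mul_le_self n c
      have h3 : (t.1 + 1) * c = t.1 * c + c := by ring
      omega
    by_contra h
    push_neg at h
    exact hbad ⟨t.1 * c, htc, (window_iff htc).mpr (fun k hk h1 h2 => h k hk h1 h2)⟩
  choose k hk h1 h2 h3 using hsel
  have hinj : Function.Injective (fun t : Fin (n / c) => P.get ⟨k t, hk t⟩) := by
    intro t t' he
    by_contra hne
    have hkk : k t ≠ k t' := by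
      have hv : t.1 ≠ t'.1 := fun h => hne (Fin.ext h)
      have ha1 := h1 t
      have ha2 := h2 t
      have hb1 := h1 t'
      have hb2 := h2 t'
      rcases Nat.lt_or_ge t.1 t'.1 with h | h
      · have hm := Nat.mul_le_mul_right c (Nat.succ_le_of_lt h)
        have hsm := Nat.succ_mul t.1 c
        omega
      · have hlt : t'.1 < t.1 := by omega
        have hm := Nat.mul_le_mul_right c (Nat.succ_le_of_lt hlt)
        have hsm := Nat.succ_mul t'.1 c
        omega
    exact hkk (congrArg Fin.val (hnd.get_inj_iff.mp he))
  calc n / c = (Finset.univ : Finset (Fin (n / c))).card := by simp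
    _ ≤ (P.toFinset.filter (fun v => G.Adj x v)).card := by
        apply Finset.card_le_card_of_injOn (fun t => P.get ⟨k t, hk t⟩)
        · intro t _
          exact Finset.mem_filter.mpr ⟨List.mem_toFinset.mpr (List.get_mem _ _), h3 t⟩
        · exact fun a _ b _ h => hinj h

lemma path_bad_bound (c d1 : ℕ) (hc : 0 < c) (S : Finset V) (P : List V)
    (hP : IsPathList G P)
    (hmeag : ∀ v ∈ P, (S.filter (fun y => G.Adj v y)).card ≤ d1)
    (hnbr : ∀ x ∈ S, ∃ v ∈ P, G.Adj x v)
    (hScard : S.card = 2 * c * d1 + 2 * c) :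
    (S.filter (fun x => ¬ HasWindow G c x P)).card ≤ 2 * c * d1 := by
  set n := P.length with hn
  have hnd := hP.2.1
  have hcardP : P.toFinset.card = n := List.toFinset_card_of_nodup hnd
  -- upper bound on total adjacency
  have hup : ∑ x ∈ S, (P.toFinset.filter (fun v => G.Adj x v)).card ≤ n * d1 := by
    rw [swap_count S P.toFinset (fun x v => G.Adj x v)]
    calc ∑ v ∈ P.toFinset, (S.filter (fun x => G.Adj x v)).card
        ≤ ∑ _v ∈ P.toFinset, d1 := by
          apply Finset.sum_le_sum
          intro v hv
          have : (S.filter (fun x => G.Adj x v)) = (S.filter (fun y => G.Adj v y)) := by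
            apply Finset.filter_congr
            intro y _
            simp [SimpleGraph.adj_comm]
          rw [this]
          exact hmeag v (List.mem_toFinset.mp hv)
      _ = n * d1 := by rw [Finset.sum_const, hcardP, smul_eq_mul]
  -- lower bound
  have hlow : S.card ≤ ∑ x ∈ S, (P.toFinset.filter (fun v => G.Adj x v)).card := by
    have := Finset.card_nsmul_le_sum S
      (fun x => (P.toFinset.filter (fun v => G.Adj x v)).card) 1 ?_
    · simpa using this
    · intro x hx
      obtain ⟨v, hv, ha⟩ := hnbr x hx
      have : v ∈ P.toFinset.filter (fun v => G.Adj x v) :=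
        Finset.mem_filter.mpr ⟨List.mem_toFinset.mpr hv, ha⟩
      exact Finset.card_pos.mpr ⟨v, this⟩
  have hcn : 2 * c < n := by
    by_contra hcon
    push_neg at hcon
    have : n * d1 ≤ 2 * c * d1 := Nat.mul_le_mul_right d1 hcon
    omega
  have hnc2 : 2 ≤ n / c := (Nat.le_div_iff_mul_le hc).mpr (by omega)
  have hn2c : n ≤ 2 * c * (n / c) := by
    have h1 := Nat.div_add_mod n c
    have h2 : n % c < c := Nat.mod_lt _ hc
    have h3 : c * 1 ≤ c * (n / c) := Nat.mul_le_mul_left c (by omega)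
    have h4 : 2 * c * (n / c) = c * (n / c) + c * (n / c) := by ring
    omega
  -- bad set bound
  set B := S.filter (fun x => ¬ HasWindow G c x P) with hB
  have hsum : B.card * (n / c) ≤ n * d1 := by
    calc B.card * (n / c) = B.card • (n / c) := by rw [smul_eq_mul]
      _ ≤ ∑ x ∈ B, (P.toFinset.filter (fun v => G.Adj x v)).card := by
          apply Finset.card_nsmul_le_sum
          intro x hx
          have hx' := Finset.mem_filter.mp hx
          exact bad_count hc hnd hx'.2
      _ ≤ ∑ x ∈ S, (P.toFinset.filter (fun v => G.Adj x v)).card := by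
          apply Finset.sum_le_sum_of_subset (Finset.filter_subset _ _)
      _ ≤ n * d1 := hup
  have hfin : B.card * (n / c) ≤ (2 * c * d1) * (n / c) := by
    have : n * d1 ≤ (2 * c * (n / c)) * d1 := Nat.mul_le_mul_right d1 hn2c
    have he : (2 * c * (n / c)) * d1 = (2 * c * d1) * (n / c) := by ring
    omega
  exact Nat.le_of_mul_le_mul_right hfin (by omega)


end Stmt6Aux

open Stmt6Aux in
theorem stmt6 (c d : ℕ) (hc : 0 < c) (hd : 0 < d)
    (V : Type) (G : SimpleGraph V) (S : Finset V) (L : Finset (List V))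
    (hcl : IsCluster G (2 * c * d) (2 * c ^ 2 * d) S L)
    (hm : IsMeager G d S L) :
    ∃ (x : V) (Ws : Finset (List V)), IsHassle G c x Ws := by
  obtain ⟨hScard, hLcard, hpaths, hdisj, hnbr⟩ := hcl
  set d1 := d - 1 with hd1
  have hdd : d = d1 + 1 := by omega
  -- every x ∈ S has few bad paths on average; pick a good x
  have hperpath : ∀ P ∈ L, (S.filter (fun x => ¬ HasWindow G c x P)).card ≤ 2 * c * d1 := by
    intro P hP
    apply path_bad_bound c d1 hc S P (hpaths P hP).1
    · intro v hv
      have := hm P hP v hv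
      omega
    · intro x hx
      exact hnbr x hx P hP
    · rw [hScard, hdd]; ring
  have hsum : ∑ x ∈ S, (L.filter (fun P => ¬ HasWindow G c x P)).card
      ≤ (2 * c ^ 2 * d) * (2 * c * d1) := by
    calc ∑ x ∈ S, (L.filter (fun P => ¬ HasWindow G c x P)).card
        = ∑ P ∈ L, (S.filter (fun x => ¬ HasWindow G c x P)).card :=
          by simp only [Finset.card_filter]; exact Finset.sum_comm
      _ ≤ ∑ _P ∈ L, 2 * c * d1 := Finset.sum_le_sum hperpath
      _ = (2 * c ^ 2 * d) * (2 * c * d1) := by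
          rw [Finset.sum_const, hLcard, smul_eq_mul]
  have hex : ∃ x ∈ S, (L.filter (fun P => ¬ HasWindow G c x P)).card ≤ 2 * c ^ 2 * d1 := by
    by_contra hcon
    push_neg at hcon
    have hlow : S.card * (2 * c ^ 2 * d1 + 1)
        ≤ ∑ x ∈ S, (L.filter (fun P => ¬ HasWindow G c x P)).card := by
      rw [← smul_eq_mul]
      apply Finset.card_nsmul_le_sum
      intro x hx
      exact hcon x hx
    rw [hScard, hdd] at hlow
    have hkey : (2 * c ^ 2 * (d1 + 1)) * (2 * c * d1) + 2 * c * (d1 + 1)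
        = 2 * c * (d1 + 1) * (2 * c ^ 2 * d1 + 1) := by ring
    rw [hdd] at hsum
    have hZ : 0 < 2 * c * (d1 + 1) := by positivity
    linarith
  obtain ⟨x, hxS, hxbad⟩ := hex
  have hgoodcard : c ≤ (L.filter (fun P => HasWindow G c x P)).card := by
    have htot := Finset.card_filter_add_card_filter_not
      (s := L) (p := fun P => HasWindow G c x P)
    rw [hLcard] at htot
    have he1 : 2 * c ^ 2 * d = 2 * c ^ 2 * d1 + 2 * c ^ 2 := by rw [hdd]; ring
    have he2 : c ≤ 2 * c ^ 2 := by nlinarith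
    linarith
  -- build the walks
  set Gd := L.filter (fun P => HasWindow G c x P) with hGd
  have hGdL : ∀ P ∈ Gd, P ∈ L := fun P hP => (Finset.mem_filter.mp hP).1
  have hex2 : ∀ P, P ∈ Gd → ∃ w : List V, w ≠ [] ∧ WalkList G w ∧ IsStretched G c w ∧
      (∀ v ∈ w, v ∈ P) ∧ (∃ v ∈ w, G.Adj x v) ∧
      (∀ v, (v ∈ w.take c ∨ v ∈ w.drop (w.length - c)) → ¬ G.Adj x v) := by
    intro P hP
    exact good_to_walk c hc x P (hpaths P (hGdL P hP)).1
      (Finset.mem_filter.mp hP).2 (hnbr x hxS P (hGdL P hP))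
  choose! F hF1 hF2 hF3 hF4 hF5 hF6 using hex2
  have hinj : Set.InjOn F ↑Gd := by
    intro P hP Q hQ he
    by_contra hne
    obtain ⟨v, hv⟩ := List.exists_mem_of_ne_nil _ (hF1 P hP)
    have hvP : v ∈ P := hF4 P hP v hv
    have hvQ : v ∈ Q := hF4 Q hQ v (he ▸ hv)
    exact (hdisj P (hGdL P hP) Q (hGdL Q hQ) hne v hvP v hvQ).1 rfl
  refine ⟨x, Gd.image F, ?_, ?_, ?_, ?_, ?_⟩
  · rw [Finset.card_image_of_injOn hinj]
    exact hgoodcard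
  · intro l hl
    obtain ⟨P, hP, rfl⟩ := Finset.mem_image.mp hl
    refine ⟨hF2 P hP, hF3 P hP, ?_⟩
    intro hxw
    have hxP : x ∈ P := hF4 P hP x hxw
    exact (hpaths P (hGdL P hP)).2 x hxP hxS
  · intro l hl l' hl' hne v hv
    obtain ⟨P, hP, rfl⟩ := Finset.mem_image.mp hl
    obtain ⟨Q, hQ, rfl⟩ := Finset.mem_image.mp hl'
    have hPQ : P ≠ Q := fun h => hne (by rw [h])
    intro hv'
    exact (hdisj P (hGdL P hP) Q (hGdL Q hQ) hPQ v (hF4 P hP v hv) v (hF4 Q hQ v hv')).1 rfl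
  · intro l hl
    obtain ⟨P, hP, rfl⟩ := Finset.mem_image.mp hl
    exact hF5 P hP
  · intro l hl
    obtain ⟨P, hP, rfl⟩ := Finset.mem_image.mp hl
    intro v hv
    exact hF6 P hP v hv
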